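/- Let O be a discrete valuation ring with field of fractions K, and let M ⊆ Mat_{d×e}(O) be an O-submodule with O-module basis (a_1, …, a_ℓ). Let Λ_1, …, Λ_ℓ be indeterminates and let F be the field of fractions of the polynomial ring K[Λ_1, …, Λ_ℓ]. Then max_{a ∈ M} rank_K(a) = rank_F(Λ_1 a_1 + ⋯ + Λ_ℓ a_ℓ), where rank_K(a) is the rank of a regarded as a matrix over K and the right-hand side is the rank of the matrix Λ_1 a_1 + ⋯ + Λ_ℓ a_ℓ over F. -/

import Mathlib

set_option maxHeartbeats 1000000
set_option synthInstance.maxHeartbeats 400000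

open Matrix

section RankMinors

variable {F : Type*} [Field F]

/-- Rank of a submatrix is at most the rank. -/
lemma rank_submatrix_le' {m n k : ℕ} (A : Matrix (Fin m) (Fin n) F)
    (f : Fin k → Fin m) (g : Fin k → Fin n) :
    (A.submatrix f g).rank ≤ A.rank := by
  have h1 : ((1 : Matrix (Fin m) (Fin m) F).submatrix f (Equiv.refl (Fin m))) * A
      = A.submatrix f id := by
    rw [Matrix.one_submatrix_mul]; rfl
  have h2 : (A.submatrix f id) * ((1 : Matrix (Fin n) (Fin n) F).submatrix (Equiv.refl (Fin n)) g)
      = A.submatrix f g := by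
    rw [Matrix.mul_submatrix_one]
    simp [Matrix.submatrix_submatrix]
  calc (A.submatrix f g).rank
      = (((1 : Matrix (Fin m) (Fin m) F).submatrix f (Equiv.refl (Fin m))) * A
          * ((1 : Matrix (Fin n) (Fin n) F).submatrix (Equiv.refl (Fin n)) g)).rank := by
        rw [h1, h2]
    _ ≤ (((1 : Matrix (Fin m) (Fin m) F).submatrix f (Equiv.refl (Fin m))) * A).rank :=
        Matrix.rank_mul_le_left _ _
    _ ≤ A.rank := Matrix.rank_mul_le_right _ _

lemma rank_ge_of_minor {m n k : ℕ} (A : Matrix (Fin m) (Fin n) F)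
    (f : Fin k → Fin m) (g : Fin k → Fin n) (h : (A.submatrix f g).det ≠ 0) :
    k ≤ A.rank := by
  have hu : IsUnit (A.submatrix f g) :=
    (Matrix.isUnit_iff_isUnit_det _).2 (isUnit_iff_ne_zero.2 h)
  have hr := Matrix.rank_of_isUnit _ hu
  calc k = (A.submatrix f g).rank := by rw [hr, Fintype.card_fin]
    _ ≤ A.rank := rank_submatrix_le' A f g

lemma exists_cols_li {m n : ℕ} (A : Matrix (Fin m) (Fin n) F) :
    ∃ g : Fin A.rank → Fin n, LinearIndependent F (fun i => Aᵀ (g i)) := by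
  classical
  obtain ⟨t, hts, hspan, hli⟩ := exists_linearIndependent F (Set.range Aᵀ)
  have hfin : t.Finite := hli.setFinite
  haveI := hfin.fintype
  have hcard : Fintype.card t = A.rank := by
    rw [Matrix.rank_eq_finrank_span_cols]
    change _ = Module.finrank F (Submodule.span F (Set.range Aᵀ))
    rw [← hspan, finrank_span_set_eq_card hli,
      Set.toFinset_card]
  let ε : Fin A.rank ≃ t := (Fintype.equivFinOfCardEq hcard).symm
  choose j hj using fun x : t => hts x.2
  refine ⟨fun i => j (ε i), ?_⟩
  have : (fun i => Aᵀ (j (ε i))) = (fun x : t => (x : Fin m → F)) ∘ ε := by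
    funext i; simp [hj (ε i)]
  rw [this]
  exact hli.comp ε ε.injective

lemma exists_minor {m n : ℕ} (A : Matrix (Fin m) (Fin n) F) :
    ∃ (f : Fin A.rank → Fin m) (g : Fin A.rank → Fin n),
      (A.submatrix f g).det ≠ 0 := by
  obtain ⟨g, hg⟩ := exists_cols_li A
  let B : Matrix (Fin m) (Fin A.rank) F := A.submatrix id g
  have hBtrank : Bᵀ.rank = A.rank := by
    have : LinearIndependent F (fun i => Bᵀ i) := hg
    rw [LinearIndependent.rank_matrix (M := Bᵀ) this, Fintype.card_fin]
  obtain ⟨f₀, hf₀⟩ := exists_cols_li Bᵀ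
  let f : Fin A.rank → Fin m := fun i => f₀ (Fin.cast hBtrank.symm i)
  have hf : LinearIndependent F (fun i => Bᵀᵀ (f i)) :=
    hf₀.comp (Fin.cast hBtrank.symm) fun a b h => by
      simpa using congrArg (Fin.cast hBtrank) h
  refine ⟨f, g, ?_⟩
  have hrows : LinearIndependent F (fun i => (A.submatrix f g) i) := by
    have : (fun i => (A.submatrix f g) i) = fun i => Bᵀᵀ (f i) := by
      funext i; rfl
    rw [this]; exact hf
  have hu : IsUnit (A.submatrix f g) := Matrix.linearIndependent_rows_iff_isUnit.1 hrows
  exact ((Matrix.isUnit_iff_isUnit_det _).1 hu).ne_zero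

lemma det_map' {R S : Type*} [CommRing R] [CommRing S] (f : R →+* S) {n : ℕ}
    (M : Matrix (Fin n) (Fin n) R) : (M.map f).det = f M.det := by
  rw [RingHom.map_det]; rfl

end RankMinors

/-- The generic element rank: for a module `M` of `d × e` matrices over a DVR `O` with
basis `a_1, …, a_ℓ`, the maximal rank over `K = Frac(O)` of an element of `M` equals the
rank of `Λ_1 a_1 + ⋯ + Λ_ℓ a_ℓ` over the rational function field `F = Frac(K[Λ_1,…,Λ_ℓ])`. -/
theorem generic_element_rank {O : Type*} [CommRing O] [IsDomain O] [IsDiscreteValuationRing O]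
    {d e ℓ : ℕ} (M : Submodule O (Matrix (Fin d) (Fin e) O))
    (b : Module.Basis (Fin ℓ) O M) :
    IsGreatest
      {k : ℕ | ∃ a ∈ M, (a.map (algebraMap O (FractionRing O))).rank = k}
      (Matrix.rank (∑ i : Fin ℓ,
        algebraMap (MvPolynomial (Fin ℓ) (FractionRing O))
            (FractionRing (MvPolynomial (Fin ℓ) (FractionRing O))) (MvPolynomial.X i) •
          (((b i : M) : Matrix (Fin d) (Fin e) O)).map
            ((algebraMap (MvPolynomial (Fin ℓ) (FractionRing O))
                (FractionRing (MvPolynomial (Fin ℓ) (FractionRing O)))).comp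
              ((MvPolynomial.C : FractionRing O →+* MvPolynomial (Fin ℓ) (FractionRing O)).comp
                (algebraMap O (FractionRing O)))))) := by
  classical
  obtain ⟨π, hπ⟩ := IsDiscreteValuationRing.exists_irreducible O
  haveI : Infinite O :=
    Infinite.of_injective _ (pow_injective_of_not_isUnit hπ.not_isUnit hπ.ne_zero)
  have hOK : Function.Injective (algebraMap O (FractionRing O)) :=
    IsFractionRing.injective O _
  set φ : MvPolynomial (Fin ℓ) O →+*
      FractionRing (MvPolynomial (Fin ℓ) (FractionRing O)) :=
    (algebraMap (MvPolynomial (Fin ℓ) (FractionRing O))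
        (FractionRing (MvPolynomial (Fin ℓ) (FractionRing O)))).comp
      (MvPolynomial.map (algebraMap O (FractionRing O))) with hφdef
  have hφ : Function.Injective φ := by
    rw [hφdef, RingHom.coe_comp]
    exact (IsFractionRing.injective _ _).comp (MvPolynomial.map_injective _ hOK)
  set G₁ : Matrix (Fin d) (Fin e) (MvPolynomial (Fin ℓ) O) :=
    ∑ i : Fin ℓ, (MvPolynomial.X i : MvPolynomial (Fin ℓ) O) •
      (((b i : M) : Matrix (Fin d) (Fin e) O).map
        (MvPolynomial.C : O →+* MvPolynomial (Fin ℓ) O)) with hG₁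
  have hGmap : (∑ i : Fin ℓ,
      algebraMap (MvPolynomial (Fin ℓ) (FractionRing O))
          (FractionRing (MvPolynomial (Fin ℓ) (FractionRing O))) (MvPolynomial.X i) •
        (((b i : M) : Matrix (Fin d) (Fin e) O)).map
          ((algebraMap (MvPolynomial (Fin ℓ) (FractionRing O))
              (FractionRing (MvPolynomial (Fin ℓ) (FractionRing O)))).comp
            ((MvPolynomial.C : FractionRing O →+* MvPolynomial (Fin ℓ) (FractionRing O)).comp
              (algebraMap O (FractionRing O))))) = G₁.map φ := by
    ext i j
    simp [hG₁, hφdef, Matrix.map_apply, Matrix.sum_apply, Matrix.smul_apply, map_sum,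
      smul_eq_mul, _root_.map_mul, Algebra.smul_def]
  rw [hGmap]
  have keyeval : ∀ c : Fin ℓ → O,
      G₁.map ((algebraMap O (FractionRing O)).comp (MvPolynomial.eval c))
        = (((∑ i : Fin ℓ, c i • b i : M) : Matrix (Fin d) (Fin e) O)).map
            (algebraMap O (FractionRing O)) := by
    intro c
    ext i j
    simp [hG₁, Matrix.map_apply, Matrix.sum_apply, Matrix.smul_apply, map_sum,
      smul_eq_mul, _root_.map_mul, Submodule.coe_sum]
  have hub : ∀ a ∈ M, (a.map (algebraMap O (FractionRing O))).rank ≤ (G₁.map φ).rank := by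
    intro a ha
    set c : Fin ℓ → O := fun i => b.repr ⟨a, ha⟩ i with hc
    have hsum : (∑ i : Fin ℓ, c i • b i : M) = ⟨a, ha⟩ := b.sum_repr ⟨a, ha⟩
    have haK : a.map (algebraMap O (FractionRing O))
        = G₁.map ((algebraMap O (FractionRing O)).comp (MvPolynomial.eval c)) := by
      rw [keyeval c, hsum]
    obtain ⟨f, g, hdet⟩ := exists_minor (a.map (algebraMap O (FractionRing O)))
    have heq : ((a.map (algebraMap O (FractionRing O))).submatrix f g).det
        = ((algebraMap O (FractionRing O)).comp (MvPolynomial.eval c))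
            ((G₁.submatrix f g).det) := by
      rw [← _root_.det_map', ← Matrix.submatrix_map, ← haK]
    have hq : (G₁.submatrix f g).det ≠ 0 := by
      intro h0
      exact hdet (by rw [heq, h0, map_zero])
    apply rank_ge_of_minor _ f g
    rw [Matrix.submatrix_map, _root_.det_map']
    exact fun h => hq (hφ (by rw [h, map_zero]))
  constructor
  · obtain ⟨f, g, hdet⟩ := exists_minor (G₁.map φ)
    have hq : (G₁.submatrix f g).det ≠ 0 := by
      intro h0
      apply hdet
      rw [Matrix.submatrix_map, _root_.det_map', h0, map_zero]
    obtain ⟨c, hc⟩ : ∃ c : Fin ℓ → O,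
        MvPolynomial.eval c ((G₁.submatrix f g).det) ≠ 0 := by
      by_contra h
      push_neg at h
      exact hq (MvPolynomial.funext fun x => by simpa using h x)
    refine ⟨((∑ i : Fin ℓ, c i • b i : M) : Matrix (Fin d) (Fin e) O),
      SetLike.coe_mem _, ?_⟩
    apply le_antisymm
    · exact hub _ (SetLike.coe_mem _)
    · apply rank_ge_of_minor _ f g
      rw [← keyeval c, Matrix.submatrix_map, _root_.det_map']
      simp only [RingHom.comp_apply]
      intro h0
      exact hc (hOK (by rw [h0, map_zero]))
  · rintro k ⟨a, ha, rfl⟩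
    exact hub a ha
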